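/- Every operator EDP set P in the grid graph can be fragmented into two sets P_1 and P_2 of subpaths (segments) such that each path of P is the concatenation of segments from P_1 ∪ P_2, each segment belongs to exactly one path of P, and both P_1 and P_2 are vertex-disjoint path sets. If P itself is vertex-disjoint, one may take P_1 = P and P_2 = ∅. -/

import Mathlib

/-- Adjacency relation of the `L × L` grid graph: vertices are pairs of
coordinates in `[1, L]`, adjacent when they differ by one in exactly one
coordinate. -/
def GridAdj (L : ℕ) (u v : ℕ × ℕ) : Prop :=
  u.1 ∈ Finset.Icc 1 L ∧ u.2 ∈ Finset.Icc 1 L ∧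
    v.1 ∈ Finset.Icc 1 L ∧ v.2 ∈ Finset.Icc 1 L ∧
    ((u.1 = v.1 ∧ (u.2 + 1 = v.2 ∨ v.2 + 1 = u.2)) ∨
      (u.2 = v.2 ∧ (u.1 + 1 = v.1 ∨ v.1 + 1 = u.1)))

/-- A simple path in the `L × L` grid graph, given as its list of vertices. -/
def IsGridPath (L : ℕ) (p : List (ℕ × ℕ)) : Prop :=
  2 ≤ p.length ∧ p.Nodup ∧ p.Chain' (GridAdj L)

/-- A vertex is black (a data qubit) when both coordinates are even. -/
def Black (v : ℕ × ℕ) : Prop := Even v.1 ∧ Even v.2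

/-- The (undirected) edges traversed by a path given as a list of vertices. -/
def pathEdges (p : List (ℕ × ℕ)) : List (Sym2 (ℕ × ℕ)) :=
  (p.zip p.tail).map fun e => s(e.1, e.2)

/-- An operator path: a grid path whose endpoints are black and whose interior
vertices are all non-black. -/
def IsOperatorPath (L : ℕ) (p : List (ℕ × ℕ)) : Prop :=
  IsGridPath L p ∧
    (∀ v, p.head? = some v → Black v) ∧
    (∀ v, p.getLast? = some v → Black v) ∧
    ∀ v ∈ p.tail.dropLast, ¬Black v

/-- An operator EDP set: a set of pairwise edge-disjoint operator paths,
no two of which share an endpoint. -/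
def IsOperatorEDPSet (L : ℕ) (P : Set (List (ℕ × ℕ))) : Prop :=
  (∀ p ∈ P, IsOperatorPath L p) ∧
    (P.Pairwise fun p q => ∀ e ∈ pathEdges p, e ∉ pathEdges q) ∧
    (P.Pairwise fun p q => ∀ v : ℕ × ℕ,
      (p.head? = some v ∨ p.getLast? = some v) →
      ¬(q.head? = some v ∨ q.getLast? = some v))

/-- A crossing vertex of a set of paths: a vertex contained in more than one
path of the set. -/
def IsCrossing (P : Set (List (ℕ × ℕ))) (v : ℕ × ℕ) : Prop :=
  ∃ p ∈ P, ∃ q ∈ P, p ≠ q ∧ v ∈ p ∧ v ∈ q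

/-- A set of paths is vertex-disjoint when no two distinct members share a
vertex. -/
def IsVDPSet (P : Set (List (ℕ × ℕ))) : Prop :=
  P.Pairwise fun p q => ∀ v : ℕ × ℕ, v ∈ p → v ∉ q

set_option linter.unusedSectionVars false
set_option linter.unusedVariables false

open Classical

namespace Frag

abbrev V := ℕ × ℕ

/-- i-th vertex of a path, total. -/
def vtx (p : List V) (i : ℕ) : V := p.getD i (0,0)

lemma vtx_eq (p : List V) (i : ℕ) (h : i < p.length) : vtx p i = p[i] := by
  simp [vtx, List.getD_eq_getElem?_getD, List.getElem?_eq_getElem h]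

/-- edge of a path at index i, as Sym2. -/
def Ed (p : List V) (i : ℕ) : Sym2 V := s(vtx p i, vtx p (i+1))

lemma mem_pathEdges_iff {p : List V} {e : Sym2 V} :
    e ∈ pathEdges p ↔ ∃ i, i + 1 < p.length ∧ e = Ed p i := by
  unfold pathEdges
  rw [List.mem_map]
  have hlen : (p.zip p.tail).length = p.length - 1 := by
    simp [List.length_zip]
  constructor
  · rintro ⟨⟨a,b⟩, hab, rfl⟩
    rw [List.mem_iff_getElem] at hab
    obtain ⟨i, hi, hab⟩ := hab
    rw [List.getElem_zip] at hab
    rw [hlen] at hi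
    refine ⟨i, by omega, ?_⟩
    have hti : i < p.tail.length := by simp; omega
    have h4 : p.tail[i] = p[i+1] := List.getElem_tail ..
    rw [h4] at hab
    simp only [Prod.mk.injEq] at hab
    obtain ⟨h2, h3⟩ := hab
    unfold Ed
    rw [vtx_eq p i (by omega), vtx_eq p (i+1) (by omega), ← h2, ← h3]
  · rintro ⟨i, hi, rfl⟩
    refine ⟨(p[i], p[i+1]), ?_, ?_⟩
    · rw [List.mem_iff_getElem]
      refine ⟨i, by omega, ?_⟩
      rw [List.getElem_zip, List.getElem_tail]
    · unfold Ed
      rw [vtx_eq p i (by omega), vtx_eq p (i+1) (by omega)]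

lemma Ed_mem_pathEdges {p : List V} {i : ℕ} (h : i + 1 < p.length) :
    Ed p i ∈ pathEdges p := mem_pathEdges_iff.2 ⟨i, h, rfl⟩

lemma nodup_pos {p : List V} (hnd : p.Nodup) {i j : ℕ} (hi : i < p.length)
    (hj : j < p.length) (h : p[i] = p[j]) : i = j := by
  have := List.nodup_iff_injective_get.1 hnd
    (a₁ := ⟨i, hi⟩) (a₂ := ⟨j, hj⟩) (by simpa [List.get_eq_getElem] using h)
  simpa using congrArg Fin.val this

/-- edges of an infix are edges of the whole path. -/
lemma pathEdges_infix {q p : List V} (h : q <:+: p) {e : Sym2 V}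
    (he : e ∈ pathEdges q) : e ∈ pathEdges p := by
  obtain ⟨s, t, rfl⟩ := h
  rw [mem_pathEdges_iff] at he ⊢
  obtain ⟨i, hi, rfl⟩ := he
  refine ⟨s.length + i, by simp; omega, ?_⟩
  unfold Ed
  have h1 : ∀ j, j < q.length → vtx (s ++ q ++ t) (s.length + j) = vtx q j := by
    intro j hj
    rw [vtx_eq _ _ (by simp; omega), vtx_eq _ _ hj]
    rw [List.getElem_append_left (by simp; omega), List.getElem_append_right (by omega)]
    congr 1; omega
  rw [h1 i (by omega), show s.length + i + 1 = s.length + (i+1) by omega, h1 (i+1) (by omega)]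

end Frag

namespace Frag

section Ops
variable {L : ℕ} {P : Set (List V)} (hP : IsOperatorEDPSet L P)
include hP

lemma path_len {p : List V} (hp : p ∈ P) : 2 ≤ p.length := (hP.1 p hp).1.1
lemma path_nodup {p : List V} (hp : p ∈ P) : p.Nodup := (hP.1 p hp).1.2.1
lemma path_chain {p : List V} (hp : p ∈ P) : p.Chain' (GridAdj L) := (hP.1 p hp).1.2.2

lemma head?_eq {p : List V} (hp : p ∈ P) : p.head? = some (p[0]'(by have := path_len hP hp; omega)) := by
  have h : 0 < p.length := by have := path_len hP hp; omega
  rw [List.head?_eq_getElem?, List.getElem?_eq_getElem h]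

lemma getLast?_eq {p : List V} (hp : p ∈ P) :
    p.getLast? = some (p[p.length - 1]'(by have := path_len hP hp; omega)) := by
  have h : p.length - 1 < p.length := by have := path_len hP hp; omega
  rw [List.getLast?_eq_getElem?, List.getElem?_eq_getElem h]

/-- interior vertices are non-black -/
lemma interior_nonblack {p : List V} (hp : p ∈ P) {t : ℕ} (h0 : 0 < t)
    (h1 : t + 1 < p.length) : ¬Black (p[t]'(by omega)) := by
  have h2 := (hP.1 p hp).2.2.2
  apply h2
  have hlen : t - 1 < p.tail.dropLast.length := by
    simp [List.length_dropLast, List.length_tail]; omega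
  have : p.tail.dropLast[t-1]'hlen = p[t]'(by omega) := by
    rw [List.getElem_dropLast, List.getElem_tail]
    congr 1; omega
  rw [← this]
  exact List.getElem_mem _

/-- a black vertex of a path sits at an end -/
lemma black_pos {p : List V} (hp : p ∈ P) {t : ℕ} (ht : t < p.length)
    (hb : Black (p[t]'ht)) : t = 0 ∨ t = p.length - 1 := by
  by_contra h
  push_neg at h
  exact interior_nonblack hP hp (by omega) (by have := path_len hP hp; omega) hb

/-- endpoints of distinct paths differ; so a shared vertex is non-black -/
lemma shared_nonblack {p q : List V} (hp : p ∈ P) (hq : q ∈ P) (hne : p ≠ q)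
    {v : V} (hvp : v ∈ p) (hvq : v ∈ q) : ¬Black v := by
  intro hb
  obtain ⟨t, ht, rfl⟩ := List.mem_iff_getElem.1 hvp
  obtain ⟨s, hs, hsv⟩ := List.mem_iff_getElem.1 hvq
  have hep : p.head? = some (p[t]'ht) ∨ p.getLast? = some (p[t]'ht) := by
    rcases black_pos hP hp ht hb with h | h
    · left; rw [head?_eq hP hp]; subst h; rfl
    · right; rw [getLast?_eq hP hp]; subst h; rfl
  have heq : q.head? = some (p[t]'ht) ∨ q.getLast? = some (p[t]'ht) := by
    rcases black_pos hP hq hs (by rw [hsv]; exact hb) with h | h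
    · left; rw [head?_eq hP hq, ← hsv]; subst h; rfl
    · right; rw [getLast?_eq hP hq, ← hsv]; subst h; rfl
  exact hP.2.2 hp hq hne _ hep heq

/-- a shared vertex lies strictly inside both paths -/
lemma shared_interior {p q : List V} (hp : p ∈ P) (hq : q ∈ P) (hne : p ≠ q)
    {v : V} (hvp : v ∈ p) (hvq : v ∈ q) :
    ∃ t, 0 < t ∧ ∃ h : t + 1 < p.length, p[t]'(by omega) = v := by
  obtain ⟨t, ht, rfl⟩ := List.mem_iff_getElem.1 hvp
  have h2 := path_len hP hp
  have hnb : ¬Black (p[t]'ht) := shared_nonblack hP hp hq hne (List.getElem_mem ht) hvq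
  have h0 : t ≠ 0 := by
    intro h
    apply hnb
    exact (hP.1 p hp).2.1 _ (by subst h; exact head?_eq hP hp)
  have h1 : t ≠ p.length - 1 := by
    intro h
    apply hnb
    apply (hP.1 p hp).2.2.1 _
    rw [getLast?_eq hP hp]; subst h; rfl
  exact ⟨t, by omega, by omega, rfl⟩


/-- unique incident edge at a black vertex -/
lemma black_unique_edge {p : List V} (hp : p ∈ P) {b : V} (hb : Black b)
    {e₁ e₂ : Sym2 V} (h1 : e₁ ∈ pathEdges p) (h2 : e₂ ∈ pathEdges p)
    (hb1 : b ∈ e₁) (hb2 : b ∈ e₂) : e₁ = e₂ := by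
  have hnd := path_nodup hP hp
  have key : ∀ e ∈ pathEdges p, b ∈ e → ∃ i, ∃ hi : i + 1 < p.length, e = Ed p i ∧
      (b = p[i]'(by omega) ∨ b = p[i+1]'(by omega)) := by
    intro e he hbe
    obtain ⟨i, hi, rfl⟩ := mem_pathEdges_iff.1 he
    refine ⟨i, hi, rfl, ?_⟩
    unfold Ed at hbe
    rw [vtx_eq p i (by omega), vtx_eq p (i+1) (by omega)] at hbe
    rw [Sym2.mem_iff] at hbe
    exact hbe
  obtain ⟨i, hi, rfl, hbi⟩ := key _ h1 hb1
  obtain ⟨j, hj, rfl, hbj⟩ := key _ h2 hb2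

  have hij : i = j := by
    rcases hbi with h | h <;> rcases hbj with h' | h'
    · exact nodup_pos hnd (by omega) (by omega) (h.symm.trans h')
    · exfalso
      have hij : i = j + 1 := nodup_pos hnd (by omega) (by omega) (h.symm.trans h')
      exact interior_nonblack hP hp (by omega) (by omega) (h ▸ hb)
    · exfalso
      have hij : i + 1 = j := nodup_pos hnd (by omega) (by omega) (h.symm.trans h')
      exact interior_nonblack hP hp (by omega) (by omega) (h' ▸ hb)
    · have : i + 1 = j + 1 := nodup_pos hnd (by omega) (by omega) (h.symm.trans h')
      omega
  rw [hij]

end Ops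
end Frag

namespace Frag
section Geo
variable {L : ℕ} {P : Set (List V)} (hP : IsOperatorEDPSet L P)
include hP

/-- candidate neighbours of a vertex -/
def C (v : V) : Finset V := {(v.1+1,v.2),(v.1-1,v.2),(v.1,v.2+1),(v.1,v.2-1)}

omit hP in
lemma gridAdj_symm {u v : V} (h : GridAdj L u v) : GridAdj L v u := by
  obtain ⟨h1,h2,h3,h4,h5⟩ := h
  refine ⟨h3,h4,h1,h2,?_⟩
  tauto

omit hP in
lemma mem_C_of_adj {v x : V} (h : GridAdj L v x) : x ∈ C v := by
  obtain ⟨h1,h2,h3,h4,h5⟩ := h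
  simp only [Finset.mem_Icc] at h1 h2 h3 h4
  simp only [C, Finset.mem_insert, Finset.mem_singleton]
  rcases h5 with ⟨ha, hb | hb⟩ | ⟨ha, hb | hb⟩
  · right; right; left; exact Prod.ext ha.symm (by omega)
  · right; right; right; exact Prod.ext ha.symm (by omega)
  · left; exact Prod.ext (by omega) ha.symm
  · right; left; exact Prod.ext (by omega) ha.symm

lemma path_adj {p : List V} (hp : p ∈ P) {i : ℕ} (h : i + 1 < p.length) :
    GridAdj L (p[i]'(by omega)) (p[i+1]'h) := by
  have := List.isChain_iff_getElem.1 (path_chain hP hp) i (by omega)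
  simpa [List.get_eq_getElem] using this

lemma path_coord {p : List V} (hp : p ∈ P) {v : V} (hv : v ∈ p) :
    v.1 ∈ Finset.Icc 1 L ∧ v.2 ∈ Finset.Icc 1 L := by
  obtain ⟨t, ht, rfl⟩ := List.mem_iff_getElem.1 hv
  have h2 := path_len hP hp
  rcases Nat.lt_or_ge t (p.length - 1) with h | h
  · have := path_adj hP hp (i := t) (by omega)
    exact ⟨this.1, this.2.1⟩
  · have ht' : t = p.length - 1 := by omega
    have := path_adj hP hp (i := p.length - 2) (by omega)
    have he : p.length - 2 + 1 = t := by omega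
    simp only [he] at this
    exact ⟨this.2.2.1, this.2.2.2.1⟩

omit hP in
lemma edge_endpoint_mem {p : List V} {e : Sym2 V} (he : e ∈ pathEdges p)
    {w : V} (hw : w ∈ e) : w ∈ p := by
  obtain ⟨i, hi, rfl⟩ := mem_pathEdges_iff.1 he
  unfold Ed at hw
  rw [vtx_eq p i (by omega), vtx_eq p (i+1) (by omega), Sym2.mem_iff] at hw
  rcases hw with h | h <;> rw [h] <;> exact List.getElem_mem _

/-- at a crossing of p and q, every candidate edge is used by p or q -/
lemma crossing_two {p q : List V} (hp : p ∈ P) (hq : q ∈ P) (hne : p ≠ q)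
    {v : V} (hvp : v ∈ p) (hvq : v ∈ q) :
    ∀ x ∈ C v, s(v,x) ∈ pathEdges p ∨ s(v,x) ∈ pathEdges q := by
  obtain ⟨t, ht0, ht1, htv⟩ := shared_interior hP hp hq hne hvp hvq
  obtain ⟨s, hs0, hs1, hsv⟩ := shared_interior hP hq hp hne.symm hvq hvp
  have hndp := path_nodup hP hp
  have hndq := path_nodup hP hq
  set a₁ : V := p[t-1]'(by omega) with ha1
  set a₂ : V := p[t+1]'(by omega) with ha2
  set b₁ : V := q[s-1]'(by omega) with hb1
  set b₂ : V := q[s+1]'(by omega) with hb2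
  have hEa1 : s(v, a₁) ∈ pathEdges p := by
    have := Ed_mem_pathEdges (p := p) (i := t-1) (by omega)
    unfold Ed at this
    rw [vtx_eq p (t-1) (by omega), vtx_eq p (t-1+1) (by omega)] at this
    have e1 : t - 1 + 1 = t := by omega
    simp_rw [e1, htv] at this
    rwa [Sym2.eq_swap] at this
  have hEa2 : s(v, a₂) ∈ pathEdges p := by
    have := Ed_mem_pathEdges (p := p) (i := t) (by omega)
    unfold Ed at this
    rw [vtx_eq p t (by omega), vtx_eq p (t+1) (by omega), htv] at this
    exact this
  have hEb1 : s(v, b₁) ∈ pathEdges q := by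
    have := Ed_mem_pathEdges (p := q) (i := s-1) (by omega)
    unfold Ed at this
    rw [vtx_eq q (s-1) (by omega), vtx_eq q (s-1+1) (by omega)] at this
    have e1 : s - 1 + 1 = s := by omega
    simp_rw [e1, hsv] at this
    rwa [Sym2.eq_swap] at this
  have hEb2 : s(v, b₂) ∈ pathEdges q := by
    have := Ed_mem_pathEdges (p := q) (i := s) (by omega)
    unfold Ed at this
    rw [vtx_eq q s (by omega), vtx_eq q (s+1) (by omega), hsv] at this
    exact this
  have hdisj := hP.2.1 hp hq hne
  -- distinctness of the four neighbours
  have hab : ∀ a b : V, s(v,a) ∈ pathEdges p → s(v,b) ∈ pathEdges q → a ≠ b := by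
    intro a b hap hbq hEq
    rw [hEq] at hap
    exact hdisj _ hap hbq
  have ha12 : a₁ ≠ a₂ := by
    intro h
    have : t - 1 = t + 1 := nodup_pos hndp (by omega) (by omega) h
    omega
  have hb12 : b₁ ≠ b₂ := by
    intro h
    have : s - 1 = s + 1 := nodup_pos hndq (by omega) (by omega) h
    omega
  -- the four neighbours as a finset
  have hsub : ({a₁, a₂, b₁, b₂} : Finset V) ⊆ C v := by
    intro x hx
    simp only [Finset.mem_insert, Finset.mem_singleton] at hx
    apply mem_C_of_adj (L := L)
    rcases hx with rfl | rfl | rfl | rfl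
    · apply gridAdj_symm (L := L)
      have := path_adj hP hp (i := t-1) (by omega)
      have e1 : t - 1 + 1 = t := by omega
      simp only [e1, htv] at this
      exact this
    · have := path_adj hP hp (i := t) (by omega)
      rw [htv] at this
      exact this
    · apply gridAdj_symm (L := L)
      have := path_adj hP hq (i := s-1) (by omega)
      have e1 : s - 1 + 1 = s := by omega
      simp only [e1, hsv] at this
      exact this
    · have := path_adj hP hq (i := s) (by omega)
      rw [hsv] at this
      exact this
  have hcard : ({a₁, a₂, b₁, b₂} : Finset V).card = 4 := by
    rw [Finset.card_insert_of_notMem, Finset.card_insert_of_notMem,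
      Finset.card_insert_of_notMem, Finset.card_singleton]
    · simp only [Finset.mem_singleton]; exact hb12
    · simp only [Finset.mem_insert, Finset.mem_singleton]
      push_neg
      exact ⟨hab _ _ hEa2 hEb1, hab _ _ hEa2 hEb2⟩
    · simp only [Finset.mem_insert, Finset.mem_singleton]
      push_neg
      exact ⟨ha12, hab _ _ hEa1 hEb1, hab _ _ hEa1 hEb2⟩
  have hCcard : (C v).card ≤ 4 := by
    unfold C
    apply le_trans (Finset.card_insert_le _ _)
    apply Nat.succ_le_succ
    apply le_trans (Finset.card_insert_le _ _)
    apply Nat.succ_le_succ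
    apply le_trans (Finset.card_insert_le _ _)
    apply Nat.succ_le_succ
    simp
  have heq : ({a₁, a₂, b₁, b₂} : Finset V) = C v :=
    Finset.eq_of_subset_of_card_le hsub (by omega)
  intro x hx
  rw [← heq] at hx
  simp only [Finset.mem_insert, Finset.mem_singleton] at hx
  rcases hx with rfl | rfl | rfl | rfl
  · exact Or.inl hEa1
  · exact Or.inl hEa2
  · exact Or.inr hEb1
  · exact Or.inr hEb2

lemma crossing_all_edges {v : V} (hv : IsCrossing P v) :
    ∀ x ∈ C v, ∃ r ∈ P, s(v,x) ∈ pathEdges r := by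
  obtain ⟨p, hp, q, hq, hne, hvp, hvq⟩ := hv
  intro x hx
  rcases crossing_two hP hp hq hne hvp hvq x hx with h | h
  · exact ⟨p, hp, h⟩
  · exact ⟨q, hq, h⟩

lemma crossing_nonblack {v : V} (hv : IsCrossing P v) : ¬Black v := by
  obtain ⟨p, hp, q, hq, hne, hvp, hvq⟩ := hv
  exact shared_nonblack hP hp hq hne hvp hvq

/-- key geometric lemma: no L-shaped corner of crossings -/
lemma no_corner {x y : ℕ} (hu : IsCrossing P (x, y+1)) (hv : IsCrossing P (x+1, y))
    (hw : IsCrossing P (x+1, y+1)) : False := by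
  -- parity: x and y are even
  have hnu := crossing_nonblack hP hu
  have hnv := crossing_nonblack hP hv
  have hnw := crossing_nonblack hP hw
  have h1 : x % 2 = 0 → (y + 1) % 2 = 1 := by
    simpa [Black, not_and_or, Nat.even_iff] using hnu
  have h2 : (x + 1) % 2 = 0 → y % 2 = 1 := by
    simpa [Black, not_and_or, Nat.even_iff] using hnv
  have h3 : (x + 1) % 2 = 0 → (y + 1) % 2 = 1 := by
    simpa [Black, not_and_or, Nat.even_iff] using hnw
  have hx : Even x ∧ Even y := by
    constructor <;> rw [Nat.even_iff] <;> omega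
  -- the black corner
  have hb : Black (x, y) := ⟨hx.1, hx.2⟩
  obtain ⟨p₁, hp₁, he₁⟩ := crossing_all_edges hP hu (x, y) (by
    simp only [C, Finset.mem_insert, Finset.mem_singleton]; right; right; right; simp)
  obtain ⟨p₂, hp₂, he₂⟩ := crossing_all_edges hP hv (x, y) (by
    simp only [C, Finset.mem_insert, Finset.mem_singleton]; right; left; simp)
  have hbm1 : (x,y) ∈ p₁ := edge_endpoint_mem he₁ (by simp)
  have hbm2 : (x,y) ∈ p₂ := edge_endpoint_mem he₂ (by simp)
  by_cases h12 : p₁ = p₂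
  · subst h12
    have := black_unique_edge hP hp₁ hb he₁ he₂ (by simp) (by simp)
    rw [Sym2.eq_iff] at this
    simp only [Prod.mk.injEq] at this
    omega
  · exact shared_nonblack hP hp₁ hp₂ h12 hbm1 hbm2 hb

end Geo
end Frag

namespace Frag

attribute [local instance] Classical.propDecidable

/-- does path r use the edge from v to its left neighbour? -/
noncomputable def useL (r : List V) (v : V) : Bool :=
  decide (s(v, (v.1 - 1, v.2)) ∈ pathEdges r)

/-- horizontal guard -/
def HG (P : Set (List V)) (v : V) : Prop :=
  1 ≤ v.1 ∧ IsCrossing P (v.1 - 1, v.2) ∧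
    ∃ r, r ∈ P ∧ s((v.1 - 1, v.2), v) ∈ pathEdges r

/-- vertical guard -/
def VG (P : Set (List V)) (v : V) : Prop :=
  1 ≤ v.2 ∧ IsCrossing P (v.1, v.2 - 1) ∧
    ∃ r, r ∈ P ∧ s((v.1, v.2 - 1), v) ∈ pathEdges r

noncomputable def base (P : Set (List V)) (v : V) : Bool :=
  if h : HG P v then
    ((base P (v.1 - 1, v.2)).xor (useL h.2.2.choose (v.1 - 1, v.2))).xor
      (useL h.2.2.choose v)
  else if h' : VG P v then
    ((base P (v.1, v.2 - 1)).xor (useL h'.2.2.choose (v.1, v.2 - 1))).xor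
      (useL h'.2.2.choose v)
  else false
termination_by v.1 + v.2
decreasing_by
  · have := h.1; omega
  · have := h'.1; omega

/-- the colour of the passage of path r through vertex v -/
noncomputable def colr (P : Set (List V)) (r : List V) (v : V) : Bool :=
  (base P v).xor (useL r v)

section Col
variable {L : ℕ} {P : Set (List V)} (hP : IsOperatorEDPSet L P)
include hP

/-- the path using a given edge is unique -/
lemma owner_unique {p r : List V} (hp : p ∈ P) (hr : r ∈ P) {e : Sym2 V}
    (hep : e ∈ pathEdges p) (her : e ∈ pathEdges r) : r = p := by
  by_contra h
  exact hP.2.1 hr hp h _ her hep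

/-- colours of the two paths at a crossing differ -/
lemma col_ne {p q : List V} (hp : p ∈ P) (hq : q ∈ P) (hne : p ≠ q)
    {v : V} (hvp : v ∈ p) (hvq : v ∈ q) : colr P p v ≠ colr P q v := by
  have hx : (v.1 - 1, v.2) ∈ C v := by
    simp [C]
  have hused := crossing_two hP hp hq hne hvp hvq _ hx
  have hdisj := hP.2.1 hp hq hne
  unfold colr
  rcases hused with h | h
  · have h1 : useL p v = true := decide_eq_true h
    have h2 : useL q v = false := decide_eq_false fun hc => hdisj _ h hc
    rw [h1, h2]
    cases base P v <;> simp
  · have h2 : useL q v = true := decide_eq_true h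
    have h1 : useL p v = false := decide_eq_false fun hc => hP.2.1 hq hp hne.symm _ h hc
    rw [h1, h2]
    cases base P v <;> simp

/-- horizontal propagation -/
lemma col_eq_H {p : List V} (hp : p ∈ P) {a b : ℕ}
    (hv : IsCrossing P (a, b)) (he : s((a,b),(a+1,b)) ∈ pathEdges p) :
    colr P p (a, b) = colr P p (a+1, b) := by
  have hH : HG P (a+1, b) := ⟨by omega, hv, p, hp, he⟩
  have hbase : base P (a+1, b) =
      ((base P (a, b)).xor (useL hH.2.2.choose (a, b))).xor (useL hH.2.2.choose (a+1, b)) := by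
    rw [base, dif_pos hH]
    rfl
  have hro : hH.2.2.choose = p :=
    owner_unique hP hp hH.2.2.choose_spec.1 he hH.2.2.choose_spec.2
  rw [hro] at hbase
  unfold colr
  rw [hbase]
  cases base P (a, b) <;> cases useL p (a, b) <;> cases useL p (a+1, b) <;> rfl

/-- vertical propagation -/
lemma col_eq_V {p : List V} (hp : p ∈ P) {a b : ℕ}
    (hv : IsCrossing P (a, b)) (hw : IsCrossing P (a, b+1))
    (he : s((a,b),(a,b+1)) ∈ pathEdges p) :
    colr P p (a, b) = colr P p (a, b+1) := by
  -- the horizontal guard at (a, b+1) fails, by no_corner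
  have hHf : ¬ HG P (a, b+1) := by
    rintro ⟨ha, hu, -⟩
    obtain ⟨a', rfl⟩ : ∃ a', a = a' + 1 := ⟨a - 1, by omega⟩
    exact no_corner hP (by simpa using hu) hv hw
  have hV : VG P (a, b+1) := ⟨by omega, hv, p, hp, he⟩
  have hbase : base P (a, b+1) =
      ((base P (a, b)).xor (useL hV.2.2.choose (a, b))).xor (useL hV.2.2.choose (a, b+1)) := by
    rw [base, dif_neg hHf, dif_pos hV]
    rfl
  have hro : hV.2.2.choose = p :=
    owner_unique hP hp hV.2.2.choose_spec.1 he hV.2.2.choose_spec.2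
  rw [hro] at hbase
  unfold colr
  rw [hbase]
  cases base P (a, b) <;> cases useL p (a, b) <;> cases useL p (a, b+1) <;> rfl

/-- propagation along any edge of a path joining two crossings -/
lemma col_eq_adj {p : List V} (hp : p ∈ P) {u w : V}
    (hu : IsCrossing P u) (hw : IsCrossing P w) (hadj : GridAdj L u w)
    (he : s(u, w) ∈ pathEdges p) : colr P p u = colr P p w := by
  obtain ⟨h1,h2,h3,h4,h5⟩ := hadj
  obtain ⟨a, b⟩ := u
  obtain ⟨c, d⟩ := w
  simp only at h5 ⊢
  rcases h5 with ⟨hx, hy | hy⟩ | ⟨hx, hy | hy⟩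
  · -- same column, d = b+1
    subst hx; rw [← hy]
    exact col_eq_V hP hp hu (by rwa [hy]) (by rwa [← hy] at he)
  · subst hx; rw [← hy]
    exact (col_eq_V hP hp hw (by rwa [hy]) (by rw [← hy, Sym2.eq_swap] at he; exact he)).symm
  · subst hx; rw [← hy]
    exact col_eq_H hP hp hu (by rwa [← hy] at he)
  · subst hx; rw [← hy]
    exact (col_eq_H hP hp hw (by rw [← hy, Sym2.eq_swap] at he; exact he)).symm

end Col
end Frag

namespace Frag

/-- label of an edge -/
noncomputable def elb (P : Set (List V)) (e : Sym2 V) : Bool :=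
  if h : ∃ w, w ∈ e ∧ IsCrossing P w ∧ ∃ r, r ∈ P ∧ e ∈ pathEdges r then
    colr P h.choose_spec.2.2.choose h.choose
  else false

section Lab
variable {L : ℕ} {P : Set (List V)} (hP : IsOperatorEDPSet L P)
include hP

/-- label of an edge of p incident to a crossing v equals the colour of p at v -/
lemma label_eq {p : List V} (hp : p ∈ P) {i : ℕ} (hi : i + 1 < p.length) {v : V}
    (hv : v = p[i]'(by omega) ∨ v = p[i+1]'hi) (hcr : IsCrossing P v) :
    elb P (Ed p i) = colr P p v := by
  have hEd : Ed p i = s(p[i]'(by omega), p[i+1]'hi) := by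
    unfold Ed
    rw [vtx_eq p i (by omega), vtx_eq p (i+1) hi]
  have hmem : v ∈ Ed p i := by
    rw [hEd, Sym2.mem_iff]
    exact hv
  have hg : ∃ w, w ∈ Ed p i ∧ IsCrossing P w ∧ ∃ r, r ∈ P ∧ Ed p i ∈ pathEdges r :=
    ⟨v, hmem, hcr, p, hp, Ed_mem_pathEdges hi⟩
  unfold elb
  rw [dif_pos hg]
  set w := hg.choose with hw
  have hspec := hg.choose_spec
  have hro : hg.choose_spec.2.2.choose = p :=
    owner_unique hP hp hg.choose_spec.2.2.choose_spec.1 (Ed_mem_pathEdges hi)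
      hg.choose_spec.2.2.choose_spec.2
  rw [hro]
  -- now show colr P p w = colr P p v
  have hwmem : w ∈ Ed p i := hspec.1
  have hwcr : IsCrossing P w := hspec.2.1
  rw [hEd, Sym2.mem_iff] at hwmem
  have hgadj : GridAdj L (p[i]'(by omega)) (p[i+1]'hi) := path_adj hP hp hi
  rcases hwmem with hw1 | hw1 <;> rcases hv with hv1 | hv1
  · rw [hw1, ← hv1]
  · -- w = p[i], v = p[i+1]
    rw [hw1, hv1]
    exact col_eq_adj hP hp (hw1 ▸ hwcr) (hv1 ▸ hcr) hgadj (hEd ▸ Ed_mem_pathEdges hi)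
  · -- w = p[i+1], v = p[i]
    rw [hw1, hv1]
    exact (col_eq_adj hP hp (hv1 ▸ hcr) (hw1 ▸ hwcr) hgadj (hEd ▸ Ed_mem_pathEdges hi)).symm
  · rw [hw1, ← hv1]

end Lab
end Frag

namespace Frag

attribute [local instance] Classical.propDecidable

noncomputable def lab (P : Set (List V)) (p : List V) (i : ℕ) : Bool := elb P (Ed p i)

def isCut (P : Set (List V)) (p : List V) (j : ℕ) : Prop :=
  j = 0 ∨ j = p.length - 1 ∨ (0 < j ∧ j < p.length - 1 ∧ lab P p (j-1) ≠ lab P p j)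

noncomputable def segStart (P : Set (List V)) (p : List V) (i : ℕ) : ℕ :=
  Nat.findGreatest (isCut P p) i

noncomputable def segStop (P : Set (List V)) (p : List V) (i : ℕ) : ℕ :=
  if h : ∃ j, i < j ∧ isCut P p j then Nat.find h else i + 1

noncomputable def seg (P : Set (List V)) (p : List V) (i : ℕ) : List V :=
  (p.drop (segStart P p i)).take (segStop P p i - segStart P p i + 1)

def Pb (P : Set (List V)) (b : Bool) : Set (List V) :=
  {q | ∃ p ∈ P, ∃ i, i + 1 < p.length ∧ lab P p i = b ∧ q = seg P p i}

section Blocks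
variable {L : ℕ} {P : Set (List V)} (hP : IsOperatorEDPSet L P)
  {p : List V} {i : ℕ}

lemma isCut_zero : isCut P p 0 := Or.inl rfl
lemma isCut_last : isCut P p (p.length - 1) := Or.inr (Or.inl rfl)

lemma segStart_le : segStart P p i ≤ i := Nat.findGreatest_le i

lemma segStart_isCut : isCut P p (segStart P p i) :=
  Nat.findGreatest_spec (Nat.zero_le i) isCut_zero

lemma seg_ex (hi : i + 1 < p.length) : ∃ j, i < j ∧ isCut P p j :=
  ⟨p.length - 1, by omega, isCut_last⟩

lemma segStop_eq (hi : i + 1 < p.length) : segStop P p i = Nat.find (seg_ex (P := P) hi) := by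
  unfold segStop
  rw [dif_pos (seg_ex hi)]

lemma segStop_gt (hi : i + 1 < p.length) : i < segStop P p i := by
  rw [segStop_eq hi]; exact (Nat.find_spec (seg_ex hi)).1

lemma segStop_isCut (hi : i + 1 < p.length) : isCut P p (segStop P p i) := by
  rw [segStop_eq hi]; exact (Nat.find_spec (seg_ex hi)).2

lemma segStop_le (hi : i + 1 < p.length) : segStop P p i ≤ p.length - 1 := by
  rw [segStop_eq hi]
  exact Nat.find_min' (seg_ex hi) ⟨by omega, isCut_last⟩

lemma segStop_min (hi : i + 1 < p.length) {k : ℕ} (hk : i < k) (hk2 : k < segStop P p i) :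
    ¬isCut P p k := by
  rw [segStop_eq hi] at hk2
  intro hc
  exact Nat.find_min (seg_ex hi) hk2 ⟨hk, hc⟩

lemma no_cut_inside (hi : i + 1 < p.length) {k : ℕ} (hk1 : segStart P p i < k)
    (hk2 : k < segStop P p i) : ¬isCut P p k := by
  rcases Nat.lt_or_ge i k with h | h
  · exact segStop_min (P := P) hi h hk2
  · exact Nat.findGreatest_is_greatest hk1 h

/-- labels are constant within a block -/
lemma lab_const (hi : i + 1 < p.length) {j : ℕ} (hj1 : segStart P p i ≤ j)
    (hj2 : j < segStop P p i) : lab P p j = lab P p i := by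
  have key : ∀ k, segStart P p i ≤ k → k < segStop P p i →
      lab P p (segStart P p i) = lab P p k := by
    intro k
    induction k with
    | zero =>
      intro h1 _
      interval_cases (segStart P p i)
      rfl
    | succ m ih =>
      intro h1 h2
      rcases Nat.lt_or_ge (segStart P p i) (m+1) with h | h
      · have hm : segStart P p i ≤ m := by omega
        have h3 : lab P p (segStart P p i) = lab P p m := ih hm (by omega)
        have h4 : lab P p m = lab P p (m+1) := by
          by_contra hne
          apply no_cut_inside (P := P) hi h h2
          right; right
          refine ⟨by omega, ?_, by simpa using hne⟩
          have := segStop_le (P := P) hi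
          omega
        rw [h3, h4]
      · have : segStart P p i = m + 1 := by omega
        rw [this]
  have h1 := key j hj1 hj2
  have h2 := key i segStart_le (segStop_gt (P := P) hi)
  rw [← h1, h2]

lemma seg_length (hi : i + 1 < p.length) :
    (seg P p i).length = segStop P p i - segStart P p i + 1 := by
  unfold seg
  rw [List.length_take, List.length_drop]
  have h1 := segStart_le (P := P) (p := p) (i := i)
  have h2 := segStop_le (P := P) hi
  have h3 := segStop_gt (P := P) hi
  omega

lemma seg_getElem (hi : i + 1 < p.length) {t : ℕ} (ht : t < (seg P p i).length) :
    (seg P p i)[t] = p[segStart P p i + t]'(by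
      rw [seg_length (P := P) hi] at ht
      have h2 := segStop_le (P := P) hi
      have h3 := segStart_le (P := P) (p := p) (i := i)
      omega) := by
  simp only [seg, List.getElem_take, List.getElem_drop]

lemma seg_two_le (hi : i + 1 < p.length) : 2 ≤ (seg P p i).length := by
  rw [seg_length (P := P) hi]
  have h1 := segStart_le (P := P) (p := p) (i := i)
  have h3 := segStop_gt (P := P) hi
  omega

lemma seg_infix : seg P p i <:+: p := by
  unfold seg
  exact ((p.drop (segStart P p i)).take_prefix _).isInfix.trans
    (p.drop_suffix _).isInfix

lemma seg_edge (hi : i + 1 < p.length) {j : ℕ} (hj1 : segStart P p i ≤ j)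
    (hj2 : j < segStop P p i) : Ed p j ∈ pathEdges (seg P p i) := by
  rw [mem_pathEdges_iff]
  have h2 := segStop_le (P := P) hi
  have hlen := seg_length (P := P) hi
  refine ⟨j - segStart P p i, by omega, ?_⟩
  unfold Ed
  have e1 : (seg P p i)[j - segStart P p i]'(by omega) = p[j]'(by omega) := by
    rw [seg_getElem (P := P) hi]
    congr 1
    omega
  have e2 : (seg P p i)[j - segStart P p i + 1]'(by omega) = p[j+1]'(by omega) := by
    rw [seg_getElem (P := P) hi]
    congr 1
    omega
  rw [vtx_eq _ _ (by omega : j - segStart P p i < (seg P p i).length),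
    vtx_eq _ _ (by omega : j - segStart P p i + 1 < (seg P p i).length),
    e1, e2, vtx_eq p j (by omega), vtx_eq p (j+1) (by omega)]

lemma seg_mem (hi : i + 1 < p.length) {v : V} (hv : v ∈ seg P p i) :
    ∃ t, segStart P p i ≤ t ∧ t ≤ segStop P p i ∧ ∃ ht : t < p.length, p[t]'ht = v := by
  obtain ⟨u, hu, huv⟩ := List.mem_iff_getElem.1 hv
  have hlen := seg_length (P := P) hi
  have h2 := segStop_le (P := P) hi
  have h4 := segStart_le (P := P) (p := p) (i := i)
  have h5 := segStop_gt (P := P) hi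
  have hu2 := hu
  rw [hlen] at hu2
  refine ⟨segStart P p i + u, by omega, by omega, by omega, ?_⟩
  rw [← seg_getElem (P := P) hi hu]
  exact huv

end Blocks
end Frag

namespace Frag

lemma getElem_congr_idx (l : List V) {a b : ℕ} (h : a = b) (ha : a < l.length) :
    l[a]'ha = l[b]'(h ▸ ha) := by subst h; rfl

section Main
variable {L : ℕ} {P : Set (List V)} (hP : IsOperatorEDPSet L P)
include hP

lemma crossing_other {p : List V} (hp : p ∈ P) {v : V} (hcr : IsCrossing P v)
    (hvp : v ∈ p) : ∃ q ∈ P, q ≠ p ∧ v ∈ q := by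
  obtain ⟨r₁, hr₁, r₂, hr₂, hne, hv₁, hv₂⟩ := hcr
  by_cases h : r₁ = p
  · exact ⟨r₂, hr₂, by rw [← h]; exact hne.symm, hv₂⟩
  · exact ⟨r₁, hr₁, h, hv₁⟩

/-- the label of a block containing a crossing vertex v is the colour of p at v -/
lemma block_label {p : List V} (hp : p ∈ P) {i : ℕ} (hi : i + 1 < p.length)
    {v : V} (hcr : IsCrossing P v) (hv : v ∈ seg P p i) :
    lab P p i = colr P p v := by
  obtain ⟨q, hq, hqne, hvq⟩ := crossing_other hP hp hcr (seg_infix.subset hv)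
  obtain ⟨t, ht0, ht1, htv⟩ := shared_interior hP hp hq (Ne.symm hqne) (seg_infix.subset hv) hvq
  obtain ⟨t', htst, htsp, ht', ht'v⟩ := seg_mem hi hv
  have hnd := path_nodup hP hp
  have htt : t' = t := nodup_pos hnd ht' (by omega) (by rw [ht'v, htv])
  subst htt
  rcases Nat.lt_or_ge t' (segStop P p i) with h | h
  · have h1 : lab P p t' = lab P p i := lab_const hi htst h
    rw [← h1]
    exact label_eq hP hp (by omega) (Or.inl htv.symm) hcr
  · have hsp : t' = segStop P p i := by omega
    have hstlt : segStart P p i ≤ t' - 1 := by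
      have := segStart_le (P := P) (p := p) (i := i)
      have := segStop_gt (P := P) hi
      omega
    have h1 : lab P p (t' - 1) = lab P p i := lab_const hi hstlt (by omega)
    rw [← h1]
    apply label_eq hP hp (i := t' - 1) (by omega) ?_ hcr
    right
    rw [← htv]
    exact (getElem_congr_idx p (by omega : t' - 1 + 1 = t') (by omega)).symm

/-- blocks with the same start coincide -/
lemma seg_eq_of_start_eq {p : List V} {i i' : ℕ} (hi : i + 1 < p.length)
    (hi' : i' + 1 < p.length) (h : segStart P p i = segStart P p i') :
    seg P p i = seg P p i' := by
  have hgt := segStop_gt (P := P) hi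
  have hgt' := segStop_gt (P := P) hi'
  have hle := segStart_le (P := P) (p := p) (i := i)
  have hle' := segStart_le (P := P) (p := p) (i := i')
  have h1 : i' < segStop P p i := by
    by_contra hcon
    push_neg at hcon
    have h2 : segStop P p i ≤ segStart P p i' :=
      Nat.le_findGreatest hcon (segStop_isCut (P := P) hi)
    omega
  have h2 : i < segStop P p i' := by
    by_contra hcon
    push_neg at hcon
    have h2 : segStop P p i' ≤ segStart P p i :=
      Nat.le_findGreatest hcon (segStop_isCut (P := P) hi')
    omega
  have heq : segStop P p i = segStop P p i' := by
    apply le_antisymm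
    · rw [segStop_eq (P := P) hi]
      exact Nat.find_min' (seg_ex (P := P) hi) ⟨h2, segStop_isCut (P := P) hi'⟩
    · rw [segStop_eq (P := P) hi']
      exact Nat.find_min' (seg_ex (P := P) hi') ⟨h1, segStop_isCut (P := P) hi⟩
  unfold seg
  rw [h, heq]

/-- two distinct blocks of the same path sharing a vertex have different labels -/
lemma same_path_blocks {p : List V} (hp : p ∈ P) {i i' : ℕ} (hi : i + 1 < p.length)
    (hi' : i' + 1 < p.length) (hlt : segStart P p i < segStart P p i')
    {v : V} (hv : v ∈ seg P p i) (hv' : v ∈ seg P p i') :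
    lab P p i ≠ lab P p i' := by
  have hnd := path_nodup hP hp
  obtain ⟨t, hts, htp, ht, htv⟩ := seg_mem hi hv
  obtain ⟨t', hts', htp', ht', ht'v⟩ := seg_mem hi' hv'
  have htt : t = t' := nodup_pos hnd ht ht' (by rw [htv, ht'v])
  subst htt
  -- segStart i' is a cut, > segStart i, ≤ t ≤ segStop i, so = segStop i
  have hcut' : isCut P p (segStart P p i') := segStart_isCut
  have hspe : segStart P p i' = segStop P p i := by
    rcases Nat.lt_or_ge (segStart P p i') (segStop P p i) with h | h
    · exact absurd hcut' (no_cut_inside (P := P) hi hlt h)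
    · omega
  have hts2 : t = segStop P p i := by omega
  have hgt := segStop_gt (P := P) hi
  have hle := segStart_le (P := P) (p := p) (i := i)
  have hgt' := segStop_gt (P := P) hi'
  have hle2 := segStop_le (P := P) hi'
  have hle' := segStart_le (P := P) (p := p) (i := i')
  -- labels
  have hlab1 : lab P p (segStop P p i - 1) = lab P p i :=
    lab_const hi (by omega) (by omega)
  have hlab2 : lab P p (segStart P p i') = lab P p i' :=
    lab_const hi' (le_refl _) (by omega)
  -- the cut at segStart i' is a label change
  rcases hcut' with h0 | h0 | h0
  · omega
  · omega
  · obtain ⟨-, -, hne⟩ := h0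
    rw [hspe] at hne
    rw [hlab1] at hne
    have e2 : lab P p (segStop P p i) = lab P p i' := by
      rw [← hspe]; exact hlab2
    rw [e2] at hne
    exact hne

lemma vdp_Pb (b : Bool) : IsVDPSet (Pb P b) := by
  intro q₁ hq₁ q₂ hq₂ hne v hv1 hv2
  obtain ⟨p, hp, i, hi, hbi, rfl⟩ := hq₁
  obtain ⟨p', hp', i', hi', hbi', rfl⟩ := hq₂
  by_cases hpp : p = p'
  · subst hpp
    rcases Nat.lt_trichotomy (segStart P p i) (segStart P p i') with h | h | h
    · exact same_path_blocks hP hp hi hi' h hv1 hv2 (by rw [hbi, hbi'])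
    · exact hne (seg_eq_of_start_eq hP hi hi' h)
    · exact same_path_blocks hP hp hi' hi h hv2 hv1 (by rw [hbi, hbi'])
  · have hvp : v ∈ p := seg_infix.subset hv1
    have hvp' : v ∈ p' := seg_infix.subset hv2
    have hcr : IsCrossing P v := ⟨p, hp, p', hp', hpp, hvp, hvp'⟩
    have h1 : lab P p i = colr P p v := block_label hP hp hi hcr hv1
    have h2 : lab P p' i' = colr P p' v := block_label hP hp' hi' hcr hv2
    have := col_ne hP hp hp' hpp hvp hvp'
    rw [← h1, ← h2, hbi, hbi'] at this
    exact this rfl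

end Main
end Frag


/-- **fragmentation.** Every operator EDP set `P` in the grid
graph can be fragmented into two sets `P₁`, `P₂` of segments (subpaths) such
that each segment is a subpath of exactly one path of `P`, every edge of every
path of `P` is covered by a segment of that path, and both `P₁` and `P₂` are
vertex-disjoint path sets.  If `P` itself is vertex-disjoint, one may take
`P₁ = P` and `P₂ = ∅`. -/
theorem operator_edp_fragmentation (L : ℕ) (P : Set (List (ℕ × ℕ)))
    (hP : IsOperatorEDPSet L P) :
    ∃ P₁ P₂ : Set (List (ℕ × ℕ)),
      IsVDPSet P₁ ∧ IsVDPSet P₂ ∧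
      (∀ q ∈ P₁ ∪ P₂, 2 ≤ q.length ∧ ∃! p, p ∈ P ∧ q <:+: p) ∧
      (∀ p ∈ P, ∀ e ∈ pathEdges p, ∃ q ∈ P₁ ∪ P₂, q <:+: p ∧ e ∈ pathEdges q) ∧
      (IsVDPSet P → P₁ = P ∧ P₂ = ∅) := by
  classical
  by_cases hvdp : IsVDPSet P
  · refine ⟨P, ∅, hvdp, Set.pairwise_empty _, ?_, ?_, fun _ => ⟨rfl, rfl⟩⟩
    · intro q hq
      rw [Set.union_empty] at hq
      refine ⟨Frag.path_len hP hq, q, ⟨hq, List.infix_refl q⟩, ?_⟩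
      rintro y ⟨hy, hinf⟩
      by_contra hne
      have h2 := Frag.path_len hP hq
      have hv : q[0]'(by omega) ∈ q := List.getElem_mem _
      exact hvdp hq hy (fun h => hne (h ▸ rfl)) _ hv (hinf.subset hv)
    · intro p hp e he
      exact ⟨p, by rw [Set.union_empty]; exact hp, List.infix_refl p, he⟩
  · refine ⟨Frag.Pb P false, Frag.Pb P true, Frag.vdp_Pb hP false, Frag.vdp_Pb hP true,
      ?_, ?_, fun h => absurd h hvdp⟩
    · intro q hq
      have hq' : ∃ p ∈ P, ∃ i, i + 1 < p.length ∧ q = Frag.seg P p i := by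
        rcases hq with h | h
        · obtain ⟨p, hp, i, hi, -, rfl⟩ := h
          exact ⟨p, hp, i, hi, rfl⟩
        · obtain ⟨p, hp, i, hi, -, rfl⟩ := h
          exact ⟨p, hp, i, hi, rfl⟩
      obtain ⟨p, hp, i, hi, rfl⟩ := hq'
      refine ⟨Frag.seg_two_le (P := P) hi, p, ⟨hp, Frag.seg_infix⟩, ?_⟩
      rintro y ⟨hy, hinf⟩
      have hed : Frag.Ed p i ∈ pathEdges (Frag.seg P p i) :=
        Frag.seg_edge hi Frag.segStart_le (Frag.segStop_gt (P := P) hi)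
      have hed2 : Frag.Ed p i ∈ pathEdges y := Frag.pathEdges_infix hinf hed
      have hed3 : Frag.Ed p i ∈ pathEdges p := Frag.Ed_mem_pathEdges hi
      exact Frag.owner_unique hP hp hy hed3 hed2
    · intro p hp e he
      obtain ⟨i, hi, rfl⟩ := Frag.mem_pathEdges_iff.1 he
      have hmem : Frag.seg P p i ∈ Frag.Pb P (Frag.lab P p i) :=
        ⟨p, hp, i, hi, rfl, rfl⟩
      refine ⟨Frag.seg P p i, ?_, Frag.seg_infix,
        Frag.seg_edge hi Frag.segStart_le (Frag.segStop_gt (P := P) hi)⟩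
      cases hb : Frag.lab P p i
      · left; rw [← hb]; exact hmem
      · right; rw [← hb]; exact hmem
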